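/- Let n, pS be positive reals with pS > n + 1, let T > 0, σ² ≥ 0, 0 ≤ r ≤ 1, and set s = r·T, c = (1−r)·T. If r < (pS/(2·pS − n − 1))·(T + σ²)/T, then T < c + (n/(pS−n−1))·(c + σ²) + (1 − n/pS)·s. -/

import Mathlib

/-- Corollary 2, overparametrized case with `pF = 0`. -/
theorem stmt3 (n pS T σ2 r s c : ℝ) (hn : 0 < n) (hpS : 0 < pS) (h1 : n + 1 < pS)
    (hT : 0 < T) (hσ : 0 ≤ σ2) (hr0 : 0 ≤ r) (hr1 : r ≤ 1)
    (hsdef : s = r * T) (hcdef : c = (1 - r) * T)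
    (hr : r < pS / (2 * pS - n - 1) * ((T + σ2) / T)) :
    T < c + n / (pS - n - 1) * (c + σ2) + (1 - n / pS) * s := by
  subst hsdef hcdef
  have hd : 0 < pS - n - 1 := by linarith
  have h2 : 0 < 2 * pS - n - 1 := by linarith
  have hkey : r * T * (2 * pS - n - 1) < pS * (T + σ2) := by
    have h3 : r * ((2 * pS - n - 1) * T) < pS / (2 * pS - n - 1) * ((T + σ2) / T) *
        ((2 * pS - n - 1) * T) := by
      exact mul_lt_mul_of_pos_right hr (by positivity)
    have h4 : pS / (2 * pS - n - 1) * ((T + σ2) / T) * ((2 * pS - n - 1) * T)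
        = pS * (T + σ2) := by field_simp; exact div_self (by linarith : pS * 2 - n - 1 > 0).ne'
    nlinarith [h3, h4]
  have hgoal : (pS - n - 1) * pS * T < (pS - n - 1) * pS *
      ((1 - r) * T + n / (pS - n - 1) * ((1 - r) * T + σ2) + (1 - n / pS) * (r * T)) := by
    field_simp
    nlinarith [hkey, hn, hT]
  exact lt_of_mul_lt_mul_left (by nlinarith [hgoal]) (by nlinarith : (0:ℝ) ≤ (pS - n - 1) * pS)
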